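/- Let X, Y be Hilbert spaces, A, A_η : X → Y bounded with ‖A − A_η‖ ≤ η, α > 0, and x† ∈ X. Then α‖(A_η*A_η + αI)⁻¹ x†‖ ≤ η‖x†‖/√α + α‖(A*A + αI)⁻¹ x†‖. -/

import Mathlib

open ContinuousLinearMap Filter

variable {X Y : Type*} [NormedAddCommGroup X] [InnerProductSpace ℝ X] [CompleteSpace X]
  [NormedAddCommGroup Y] [InnerProductSpace ℝ Y] [CompleteSpace Y]

section Aux

open RealInnerProductSpace

private lemma aux_inner (A : X →L[ℝ] Y) (α : ℝ) (x : X) :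
    ⟪(adjoint A ∘L A + α • (1 : X →L[ℝ] X)) x, x⟫ = ‖A x‖ ^ 2 + α * ‖x‖ ^ 2 := by
  simp only [ContinuousLinearMap.add_apply, ContinuousLinearMap.comp_apply,
    ContinuousLinearMap.smul_apply, ContinuousLinearMap.one_apply, inner_add_left,
    real_inner_smul_left, adjoint_inner_left, real_inner_self_eq_norm_sq]

private lemma aux_isUnit (A : X →L[ℝ] Y) {α : ℝ} (hα : 0 < α) :
    IsUnit (adjoint A ∘L A + α • (1 : X →L[ℝ] X)) := by
  refine isUnit_of_forall_le_norm_inner_map _ (c := ⟨α, hα.le⟩) (by exact_mod_cast hα)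
    fun x => ?_
  rw [aux_inner]
  have h1 : (0 : ℝ) ≤ ‖A x‖ ^ 2 + α * ‖x‖ ^ 2 := by positivity
  rw [Real.norm_eq_abs, abs_of_nonneg h1]
  push_cast
  change ‖x‖ ^ 2 * α ≤ _
  nlinarith [norm_nonneg (A x)]

/-- `α‖x‖ ≤ ‖(A*A + αI) x‖`. -/
private lemma aux_lower (A : X →L[ℝ] Y) {α : ℝ} (hα : 0 < α) (x : X) :
    α * ‖x‖ ≤ ‖(adjoint A ∘L A + α • (1 : X →L[ℝ] X)) x‖ := by
  set B := adjoint A ∘L A + α • (1 : X →L[ℝ] X)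
  rcases eq_or_ne x 0 with rfl | hx
  · simp
  · have h1 : α * ‖x‖ ^ 2 ≤ ⟪B x, x⟫ := by
      rw [aux_inner]; nlinarith [norm_nonneg (A x), sq_nonneg ‖A x‖]
    have h2 : ⟪B x, x⟫ ≤ ‖B x‖ * ‖x‖ := real_inner_le_norm _ _
    have hxpos : 0 < ‖x‖ := norm_pos_iff.mpr hx
    nlinarith

/-- `2√α‖A x‖ ≤ ‖(A*A + αI) x‖`. -/
private lemma aux_lower2 (A : X →L[ℝ] Y) {α : ℝ} (hα : 0 < α) (x : X) :
    2 * Real.sqrt α * ‖A x‖ ≤ ‖(adjoint A ∘L A + α • (1 : X →L[ℝ] X)) x‖ := by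
  set a := adjoint A (A x) with ha
  set B := adjoint A ∘L A + α • (1 : X →L[ℝ] X)
  have hBx : B x = a + α • x := rfl
  have hsq : ‖B x‖ ^ 2 = ‖a‖ ^ 2 + 2 * α * ⟪a, x⟫ + α ^ 2 * ‖x‖ ^ 2 := by
    rw [hBx, ← real_inner_self_eq_norm_sq, inner_add_add_self]
    simp only [real_inner_smul_left, real_inner_smul_right, real_inner_self_eq_norm_sq,
      real_inner_comm x a, norm_smul, Real.norm_eq_abs, abs_of_nonneg hα.le, mul_pow]
    ring
  have hax : ⟪a, x⟫ = ‖A x‖ ^ 2 := by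
    rw [ha, adjoint_inner_left, real_inner_self_eq_norm_sq]
  have h2 : ⟪a, x⟫ ≤ ‖a‖ * ‖x‖ := real_inner_le_norm _ _
  have h3 : 4 * α * ‖A x‖ ^ 2 ≤ ‖B x‖ ^ 2 := by nlinarith [sq_nonneg (‖a‖ - α * ‖x‖)]
  have hs : Real.sqrt α ^ 2 = α := Real.sq_sqrt hα.le
  have hsnn : 0 ≤ Real.sqrt α := Real.sqrt_nonneg α
  nlinarith [norm_nonneg (B x), norm_nonneg (A x),
    sq_nonneg (‖B x‖ - 2 * Real.sqrt α * ‖A x‖)]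

/-- `2√α ‖(A*A + αI)⁻¹ (A* v)‖ ≤ ‖v‖`. -/
private lemma aux_inv_adj (A : X →L[ℝ] Y) {α : ℝ} (hα : 0 < α) (v : Y) :
    2 * Real.sqrt α * ‖(Ring.inverse (adjoint A ∘L A + α • (1 : X →L[ℝ] X))) (adjoint A v)‖
      ≤ ‖v‖ := by
  set B := adjoint A ∘L A + α • (1 : X →L[ℝ] X)
  set u := (Ring.inverse B) (adjoint A v) with hu
  have hBu : B u = adjoint A v := by
    have h := Ring.mul_inverse_cancel B (aux_isUnit A hα)
    calc B u = (B * Ring.inverse B) (adjoint A v) :=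
        (ContinuousLinearMap.mul_apply B (Ring.inverse B) (adjoint A v)).symm
    _ = adjoint A v := by rw [h, ContinuousLinearMap.one_apply]
  have h1 : ‖A u‖ ^ 2 + α * ‖u‖ ^ 2 = ⟪v, A u⟫ := by
    rw [← aux_inner A α u, show (adjoint A ∘L A + α • (1 : X →L[ℝ] X)) u = adjoint A v from hBu,
      adjoint_inner_left]
  have h2 : ⟪v, A u⟫ ≤ ‖v‖ * ‖A u‖ := real_inner_le_norm _ _
  have h3 : 4 * α * ‖u‖ ^ 2 ≤ ‖v‖ ^ 2 := by
    nlinarith [sq_nonneg (‖v‖ - 2 * ‖A u‖), norm_nonneg (A u), norm_nonneg u, norm_nonneg v]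
  have hs : Real.sqrt α ^ 2 = α := Real.sq_sqrt hα.le
  have hsnn : 0 ≤ Real.sqrt α := Real.sqrt_nonneg α
  nlinarith [norm_nonneg u, norm_nonneg v, sq_nonneg (‖v‖ - 2 * Real.sqrt α * ‖u‖)]

end Aux

theorem stmt_13 (A Aη : X →L[ℝ] Y) (η : ℝ) (hη : ‖A - Aη‖ ≤ η) (α : ℝ) (hα : 0 < α)
    (xdag : X) :
    α * ‖(Ring.inverse (adjoint Aη ∘L Aη + α • (1 : X →L[ℝ] X))) xdag‖ ≤
      η * ‖xdag‖ / Real.sqrt α +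
        α * ‖(Ring.inverse (adjoint A ∘L A + α • (1 : X →L[ℝ] X))) xdag‖ := by
  set B := adjoint A ∘L A + α • (1 : X →L[ℝ] X) with hBdef
  set Bη := adjoint Aη ∘L Aη + α • (1 : X →L[ℝ] X) with hBηdef
  set S := Ring.inverse B with hS
  set R := Ring.inverse Bη with hR
  have huB : IsUnit B := aux_isUnit A hα
  have huBη : IsUnit Bη := aux_isUnit Aη hα
  have hRBη : ∀ z, R (Bη z) = z := by
    intro z
    have h := Ring.inverse_mul_cancel Bη huBη
    calc R (Bη z) = (R * Bη) z := (ContinuousLinearMap.mul_apply R Bη z).symm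
    _ = z := by rw [h, ContinuousLinearMap.one_apply]
  have hBS : B (S xdag) = xdag := by
    have h := Ring.mul_inverse_cancel B huB
    calc B (S xdag) = (B * S) xdag := (ContinuousLinearMap.mul_apply B S xdag).symm
    _ = xdag := by rw [h, ContinuousLinearMap.one_apply]
  set w := S xdag with hw
  -- the resolvent identity, pointwise
  have e1 : R xdag - S xdag = R (B w - Bη w) := by
    calc R xdag - S xdag = R xdag - R (Bη (S xdag)) := by rw [hRBη]
    _ = R (xdag - Bη (S xdag)) := (map_sub R _ _).symm
    _ = R (B w - Bη w) := by rw [← hw, hBS]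
  have e2 : B w - Bη w = adjoint (A - Aη) (A w) + adjoint Aη ((A - Aη) w) := by
    have hadj : adjoint (A - Aη) = adjoint A - adjoint Aη := map_sub _ _ _
    simp only [hBdef, hBηdef, ContinuousLinearMap.add_apply, ContinuousLinearMap.comp_apply,
      ContinuousLinearMap.smul_apply, ContinuousLinearMap.one_apply, hadj,
      ContinuousLinearMap.sub_apply, map_sub]
    abel
  -- norm bounds
  have hD : ∀ y : Y, ‖adjoint (A - Aη) y‖ ≤ η * ‖y‖ := by
    intro y
    calc ‖adjoint (A - Aη) y‖ ≤ ‖adjoint (A - Aη)‖ * ‖y‖ := le_opNorm _ _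
    _ ≤ η * ‖y‖ := by
        have : ‖adjoint (A - Aη)‖ = ‖A - Aη‖ :=
          LinearIsometryEquiv.norm_map (adjoint (𝕜 := ℝ) (E := X) (F := Y)) (A - Aη)
        exact mul_le_mul_of_nonneg_right (this ▸ hη) (norm_nonneg y)
  have hDw : ∀ y : X, ‖(A - Aη) y‖ ≤ η * ‖y‖ := by
    intro y
    calc ‖(A - Aη) y‖ ≤ ‖A - Aη‖ * ‖y‖ := le_opNorm _ _
    _ ≤ η * ‖y‖ := mul_le_mul_of_nonneg_right hη (norm_nonneg y)
  have hηnn : 0 ≤ η := le_trans (norm_nonneg _) hη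
  have hs : Real.sqrt α ^ 2 = α := Real.sq_sqrt hα.le
  have hspos : 0 < Real.sqrt α := Real.sqrt_pos.mpr hα
  -- bound on ‖R z‖ : α ‖R z‖ ≤ ‖z‖
  have hRnorm : ∀ z : X, α * ‖R z‖ ≤ ‖z‖ := by
    intro z
    have hBz : Bη (R z) = z := by
      have h := Ring.mul_inverse_cancel Bη huBη
      calc Bη (R z) = (Bη * R) z := (ContinuousLinearMap.mul_apply Bη R z).symm
      _ = z := by rw [h, ContinuousLinearMap.one_apply]
    have := aux_lower Aη hα (R z)
    rwa [← hBηdef, hBz] at this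
  -- ‖A w‖ ≤ ‖xdag‖ / (2 √α)
  have hAw : 2 * Real.sqrt α * ‖A w‖ ≤ ‖xdag‖ := by
    have := aux_lower2 A hα w
    rwa [← hBdef, hBS] at this
  -- ‖w‖ ≤ ‖xdag‖ / α
  have hwb : α * ‖w‖ ≤ ‖xdag‖ := by
    have := aux_lower A hα w
    rwa [← hBdef, hBS] at this
  -- term 1
  have t1 : α * ‖R (adjoint (A - Aη) (A w))‖ ≤ η * ‖A w‖ :=
    le_trans (hRnorm _) (hD _)
  have t2 : 2 * Real.sqrt α * ‖R (adjoint Aη ((A - Aη) w))‖ ≤ η * ‖w‖ :=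
    le_trans (aux_inv_adj Aη hα _) (hDw _)
  have tri : ‖R xdag‖ ≤ ‖S xdag‖ + ‖R (adjoint (A - Aη) (A w))‖
      + ‖R (adjoint Aη ((A - Aη) w))‖ := by
    have : R xdag = S xdag + (R (adjoint (A - Aη) (A w)) + R (adjoint Aη ((A - Aη) w))) := by
      rw [← map_add R, ← e2, ← e1]; abel
    calc ‖R xdag‖ = ‖S xdag + (R (adjoint (A - Aη) (A w)) + R (adjoint Aη ((A - Aη) w)))‖ := by
          rw [← this]
    _ ≤ _ := by
        refine le_trans (norm_add_le _ _) ?_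
        have := norm_add_le (R (adjoint (A - Aη) (A w))) (R (adjoint Aη ((A - Aη) w)))
        linarith
  -- put it together
  have key1 : α * ‖R (adjoint (A - Aη) (A w))‖ ≤ η * ‖xdag‖ / (2 * Real.sqrt α) := by
    rw [le_div_iff₀ (by positivity)]
    calc α * ‖R (adjoint (A - Aη) (A w))‖ * (2 * Real.sqrt α) ≤ η * ‖A w‖ * (2 * Real.sqrt α) :=
        mul_le_mul_of_nonneg_right t1 (by positivity)
    _ = η * (2 * Real.sqrt α * ‖A w‖) := by ring
    _ ≤ η * ‖xdag‖ := mul_le_mul_of_nonneg_left hAw hηnn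
  have key2 : α * ‖R (adjoint Aη ((A - Aη) w))‖ ≤ η * ‖xdag‖ / (2 * Real.sqrt α) := by
    rw [le_div_iff₀ (by positivity)]
    have h1 : ‖R (adjoint Aη ((A - Aη) w))‖ * (2 * Real.sqrt α) ≤ η * ‖w‖ := by
      nlinarith [t2]
    calc α * ‖R (adjoint Aη ((A - Aη) w))‖ * (2 * Real.sqrt α)
        = α * (‖R (adjoint Aη ((A - Aη) w))‖ * (2 * Real.sqrt α)) := by ring
    _ ≤ α * (η * ‖w‖) := mul_le_mul_of_nonneg_left h1 hα.le
    _ = η * (α * ‖w‖) := by ring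
    _ ≤ η * ‖xdag‖ := mul_le_mul_of_nonneg_left hwb hηnn
  have hsum : η * ‖xdag‖ / (2 * Real.sqrt α) + η * ‖xdag‖ / (2 * Real.sqrt α)
      = η * ‖xdag‖ / Real.sqrt α := by
    field_simp; ring
  have hfin : α * ‖R xdag‖ ≤ α * ‖S xdag‖ + α * ‖R (adjoint (A - Aη) (A w))‖
      + α * ‖R (adjoint Aη ((A - Aη) w))‖ := by
    have h := mul_le_mul_of_nonneg_left tri hα.le
    rw [mul_add, mul_add] at h
    exact h
  linarith
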